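/- arXiv:1711.00120 — 3 statements merged into one kernel-verified Lean document; each statement's English description precedes it below -/
import Mathlib

section
/- Let θ, φ ∈ ℝ with sin φ cos θ ≠ 0 and r = (r_x, r_y, r_z) ∈ ℝ³. For every point p = (0, y, z) in the plane x = 0, the squared Euclidean distance from p to the line {r + t·d(θ,φ) : t ∈ ℝ} (i.e., the square of the infimum of ‖p − (r + t·d)‖ over t ∈ ℝ) equals ρ_y (y−f_y)² + ρ_z (z−f_z)² + 2 ρ_yz (y−f_y)(z−f_z), where f_y = r_y − r_x tan θ and f_z = r_z − r_x (cot φ)/(cos θ). -/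
private lemma beam_key (s c S C l u w : ℝ) (h1 : S^2+C^2=1) (h2 : s^2+c^2=1) :
    ((l*(s*C)) - ((l*(s*C))*(s*C) + (u+l*(s*S))*(s*S) + (w+l*c)*c)*(s*C))^2
    + ((u+l*(s*S)) - ((l*(s*C))*(s*C) + (u+l*(s*S))*(s*S) + (w+l*c)*c)*(s*S))^2
    + ((w+l*c) - ((l*(s*C))*(s*C) + (u+l*(s*S))*(s*S) + (w+l*c)*c)*c)^2
    = (c^2+s^2*C^2)*u^2 + s^2*w^2 + 2*(-(c*s*S))*u*w := by
  linear_combination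
    (s^2*((l+(u*s*S+w*c))^2 + l^2 + ((s^2*S^2+s^2*C^2+c^2-1)-1)*(2*l*(l+(u*s*S+w*c)) + l^2*(s^2*S^2+s^2*C^2+c^2-1)) - u^2)) * h1
    + (((l+(u*s*S+w*c))^2 + l^2 + ((s^2*S^2+s^2*C^2+c^2-1)-1)*(2*l*(l+(u*s*S+w*c)) + l^2*(s^2*S^2+s^2*C^2+c^2-1)) - u^2) - w^2) * h2

/-- Squared Euclidean distance from a point `(0,y,z)` in the photo-detector plane to the
beam line `{r + t • d(θ,φ)}` equals the quadratic form
`ρ_y (y−f_y)² + ρ_z (z−f_z)² + 2 ρ_yz (y−f_y)(z−f_z)`. -/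
theorem dist_sq_point_to_beam_line (θ φ rx ry rz y z : ℝ)
    (h : Real.sin φ * Real.cos θ ≠ 0) :
    let pt : ℝ → ℝ → ℝ → EuclideanSpace ℝ (Fin 3) :=
      fun a b c => (EuclideanSpace.equiv (Fin 3) ℝ).symm ![a, b, c]
    let d : EuclideanSpace ℝ (Fin 3) :=
      pt (Real.sin φ * Real.cos θ) (Real.sin φ * Real.sin θ) (Real.cos φ)
    let r : EuclideanSpace ℝ (Fin 3) := pt rx ry rz
    let p : EuclideanSpace ℝ (Fin 3) := pt 0 y z
    let fy : ℝ := ry - rx * Real.tan θ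
    let fz : ℝ := rz - rx * (Real.cos φ / Real.sin φ) / Real.cos θ
    let ρy : ℝ := Real.cos φ ^ 2 + Real.sin φ ^ 2 * Real.cos θ ^ 2
    let ρz : ℝ := Real.sin φ ^ 2
    let ρyz : ℝ := -(Real.cos φ * Real.sin φ * Real.sin θ)
    (⨅ t : ℝ, ‖p - (r + t • d)‖) ^ 2 =
      ρy * (y - fy) ^ 2 + ρz * (z - fz) ^ 2 + 2 * ρyz * (y - fy) * (z - fz) := by
  intro pt d r p fy fz ρy ρz ρyz
  obtain ⟨hs, hC⟩ := mul_ne_zero_iff.mp h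
  set s := Real.sin φ with hsdef
  set c := Real.cos φ with hcdef
  set S := Real.sin θ with hSdef
  set C := Real.cos θ with hCdef
  have h1 : S^2 + C^2 = 1 := Real.sin_sq_add_cos_sq θ
  have h2 : s^2 + c^2 = 1 := Real.sin_sq_add_cos_sq φ
  set g : ℝ → ℝ := fun t =>
    (0 - (rx + t * (s * C)))^2 + (y - (ry + t * (s * S)))^2 + (z - (rz + t * c))^2 with hg
  have hnorm : ∀ t : ℝ, ‖p - (r + t • d)‖ = Real.sqrt (g t) := by
    intro t
    rw [EuclideanSpace.norm_eq]
    congr 1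
    simp [pt, d, r, p, g, Fin.sum_univ_three, sq_abs]
    rfl
  set t₀ : ℝ := (0 - rx) * (s * C) + (y - ry) * (s * S) + (z - rz) * c with ht₀
  have hmono : ∀ t : ℝ, g t₀ ≤ g t := by
    intro t
    have hdec : g t = (t - t₀)^2 + g t₀ := by
      simp only [hg, ht₀]
      linear_combination ((t^2 - ((0 - rx) * (s * C) + (y - ry) * (s * S) + (z - rz) * c)^2) * s^2) * h1
        + (t^2 - ((0 - rx) * (s * C) + (y - ry) * (s * S) + (z - rz) * c)^2) * h2
    nlinarith [sq_nonneg (t - t₀)]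
  have hbdd : BddBelow (Set.range fun t : ℝ => ‖p - (r + t • d)‖) := by
    refine ⟨0, ?_⟩
    rintro x ⟨t, rfl⟩
    exact norm_nonneg _
  have hinf : (⨅ t : ℝ, ‖p - (r + t • d)‖) = Real.sqrt (g t₀) := by
    refine le_antisymm ?_ ?_
    · exact (hnorm t₀) ▸ ciInf_le hbdd t₀
    · refine le_ciInf fun t => ?_
      rw [hnorm t]
      exact Real.sqrt_le_sqrt (hmono t)
  rw [hinf, Real.sq_sqrt (by simp only [hg]; positivity)]
  -- now the algebra
  set l : ℝ := -rx / (s * C) with hl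
  have ha : rx = -(l * (s * C)) := by
    rw [hl]; field_simp
  have hb : ry = y - ((y - fy) + l * (s * S)) := by
    show ry = y - ((y - (ry - rx * Real.tan θ)) + l * (s * S))
    rw [hl, Real.tan_eq_sin_div_cos, ← hSdef, ← hCdef]
    field_simp
    ring
  have he : rz = z - ((z - fz) + l * c) := by
    show rz = z - ((z - (rz - rx * (c / s) / C)) + l * c)
    rw [hl]
    field_simp
    ring
  have key := beam_key s c S C l (y - fy) (z - fz) h1 h2
  simp only [hg, ht₀]
  rw [ha, hb, he]
  show _ = ρy * (y - fy) ^ 2 + ρz * (z - fz) ^ 2 + 2 * ρyz * (y - fy) * (z - fz)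
  simp only [ρy, ρz, ρyz]
  linear_combination key
end

section
/- (Theorem 2, Hoyt density.) Let λ₁, λ₂ > 0 and let X, Y be independent real random variables with X ~ N(0, λ₁) and Y ~ N(0, λ₂). Then the law of u = √(X² + Y²) is absolutely continuous with respect to Lebesgue measure on ℝ, with density f(x) = (x/(2π√(λ₁λ₂))) ∫₀^{2π} exp(−x² (cos²t/(2λ₁) + sin²t/(2λ₂))) dt for x ≥ 0 and f(x) = 0 for x < 0. (This is the Hoyt/Nakagami-q distribution with parameters q = √(min{λ₁,λ₂}/max{λ₁,λ₂}) and Ω = λ₁ + λ₂.) -/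
open MeasureTheory ProbabilityTheory Real Set

theorem my_lintegral_comp_polarCoord_symm (f : ℝ × ℝ → ENNReal) :
    (∫⁻ p in polarCoord.target, ENNReal.ofReal p.1 * f (polarCoord.symm p)) = ∫⁻ p, f p := by
  set B : ℝ × ℝ → ℝ × ℝ →L[ℝ] ℝ × ℝ := fun p =>
    LinearMap.toContinuousLinearMap (Matrix.toLin (Module.Basis.finTwoProd ℝ) (Module.Basis.finTwoProd ℝ)
      !![Real.cos p.2, -p.1 * Real.sin p.2; Real.sin p.2, p.1 * Real.cos p.2])
  have A : ∀ p ∈ polarCoord.target, HasFDerivWithinAt polarCoord.symm (B p) polarCoord.target p :=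
    fun p _ => (hasFDerivAt_polarCoord_symm p).hasFDerivWithinAt
  have B_det : ∀ p, (B p).det = p.1 := by
    intro p
    conv_rhs => rw [← one_mul p.1, ← Real.cos_sq_add_sin_sq p.2]
    simp only [B, neg_mul, LinearMap.det_toContinuousLinearMap, LinearMap.det_toLin,
      Matrix.det_fin_two_of, sub_neg_eq_add]
    ring
  symm
  calc
    ∫⁻ p, f p = ∫⁻ p in polarCoord.source, f p := by
      rw [← setLIntegral_univ]
      exact (setLIntegral_congr polarCoord_source_ae_eq_univ.symm)
    _ = ∫⁻ p in polarCoord.symm '' polarCoord.target, f p := by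
      rw [polarCoord.symm_image_target_eq_source]
    _ = ∫⁻ p in polarCoord.target, ENNReal.ofReal |(B p).det| * f (polarCoord.symm p) :=
      lintegral_image_eq_lintegral_abs_det_fderiv_mul volume
        polarCoord.open_target.measurableSet A polarCoord.symm.injOn f
    _ = ∫⁻ p in polarCoord.target, ENNReal.ofReal p.1 * f (polarCoord.symm p) := by
      refine setLIntegral_congr_fun polarCoord.open_target.measurableSet
        (fun p hp => ?_)
      rw [B_det, abs_of_pos hp.1]

theorem hoyt_core (v₁ v₂ : NNReal) (h₁ : 0 < v₁) (h₂ : 0 < v₂) :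
    ((gaussianReal 0 v₁).prod (gaussianReal 0 v₂)).map
        (fun p : ℝ × ℝ => Real.sqrt (p.1 ^ 2 + p.2 ^ 2)) =
      volume.withDensity (fun x => ENNReal.ofReal (
        if 0 ≤ x then
          x / (2 * Real.pi * Real.sqrt ((v₁ : ℝ) * (v₂ : ℝ))) *
            ∫ t in (0 : ℝ)..(2 * Real.pi),
              Real.exp (-(x ^ 2) *
                (Real.cos t ^ 2 / (2 * (v₁ : ℝ)) + Real.sin t ^ 2 / (2 * (v₂ : ℝ))))
        else 0)) := by
  have hv₁ : (0:ℝ) < v₁ := h₁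
  have hv₂ : (0:ℝ) < v₂ := h₂
  set g : ℝ × ℝ → ℝ := fun p => Real.sqrt (p.1 ^ 2 + p.2 ^ 2) with hg_def
  have hg : Measurable g := ((continuous_fst.pow 2).add (continuous_snd.pow 2)).sqrt.measurable
  set dens2 : ℝ × ℝ → ENNReal := fun z => gaussianPDF 0 v₁ z.1 * gaussianPDF 0 v₂ z.2
    with hdens2_def
  have hdens2 : Measurable dens2 := ((measurable_gaussianPDF 0 v₁).comp measurable_fst).mul
    ((measurable_gaussianPDF 0 v₂).comp measurable_snd)
  set c : ℝ := (Real.sqrt (2 * π * v₁))⁻¹ * (Real.sqrt (2 * π * v₂))⁻¹ with hc_def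
  set e : ℝ → ℝ → ℝ := fun x t => Real.exp (-(x ^ 2) *
    (Real.cos t ^ 2 / (2 * (v₁:ℝ)) + Real.sin t ^ 2 / (2 * (v₂:ℝ)))) with he_def
  set I : ℝ → ℝ := fun x => ∫ t in (0:ℝ)..(2*π), e x t with hI_def
  set D : ℝ → ENNReal := fun x => ENNReal.ofReal (
        if 0 ≤ x then
          x / (2 * Real.pi * Real.sqrt ((v₁ : ℝ) * (v₂ : ℝ))) *
            ∫ t in (0 : ℝ)..(2 * Real.pi),
              Real.exp (-(x ^ 2) *
                (Real.cos t ^ 2 / (2 * (v₁ : ℝ)) + Real.sin t ^ 2 / (2 * (v₂ : ℝ))))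
        else 0) with hD_def
  have h2pi : (0:ℝ) ≤ 2 * π := by positivity
  have hc_eq : c = (2 * π * Real.sqrt ((v₁:ℝ) * (v₂:ℝ)))⁻¹ := by
    rw [hc_def, ← mul_inv, ← Real.sqrt_mul (by positivity)]
    congr 1
    rw [show (2*π*(v₁:ℝ)) * (2*π*(v₂:ℝ)) = (2*π)^2 * ((v₁:ℝ)*(v₂:ℝ)) by ring,
      Real.sqrt_mul (sq_nonneg _), Real.sqrt_sq h2pi]
  have hI_nonneg : ∀ x, 0 ≤ I x :=
    fun x => intervalIntegral.integral_nonneg (by positivity) (fun t _ => (Real.exp_pos _).le)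
  have hD_eval : ∀ x : ℝ, D x = ENNReal.ofReal (if 0 ≤ x then x * (c * I x) else 0) := by
    intro x
    simp only [hD_def, hI_def, he_def]
    congr 1
    split_ifs with hx
    · rw [hc_eq]; ring
    · rfl
  have hdp : ∀ r t : ℝ, dens2 (r * Real.cos t, r * Real.sin t) = ENNReal.ofReal (c * e r t) := by
    intro r t
    simp only [hdens2_def, gaussianPDF, gaussianPDFReal, sub_zero]
    rw [← ENNReal.ofReal_mul (by positivity)]
    congr 1
    rw [hc_def, he_def, mul_mul_mul_comm, ← Real.exp_add]
    congr 1
    ring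
  have hsymm_cont : Continuous (fun p : ℝ × ℝ => polarCoord.symm p) := by
    simp only [polarCoord_symm_apply]
    exact (continuous_fst.mul (Real.continuous_cos.comp continuous_snd)).prodMk
      (continuous_fst.mul (Real.continuous_sin.comp continuous_snd))
  have hprod : (gaussianReal 0 v₁).prod (gaussianReal 0 v₂)
      = (volume.prod volume).withDensity dens2 :=
    Measure.prod_eq fun s t hs ht => by
      rw [withDensity_apply _ (hs.prod ht), ← Measure.prod_restrict,
        lintegral_prod_mul (measurable_gaussianPDF 0 v₁).aemeasurable
          (measurable_gaussianPDF 0 v₂).aemeasurable,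
        gaussianReal_apply 0 h₁.ne' s, gaussianReal_apply 0 h₂.ne' t]
  rw [hprod]
  refine Measure.ext fun s hs => ?_
  have hmeas : Measurable fun p : ℝ × ℝ =>
      ENNReal.ofReal p.1 * (g ⁻¹' s).indicator dens2 (polarCoord.symm p) :=
    measurable_fst.ennreal_ofReal.mul ((hdens2.indicator (hg hs)).comp hsymm_cont.measurable)
  rw [Measure.map_apply hg hs, withDensity_apply _ (hg hs), withDensity_apply _ hs,
    ← Measure.volume_eq_prod, ← lintegral_indicator (hg hs), ← my_lintegral_comp_polarCoord_symm,
    polarCoord_target, Measure.volume_eq_prod, ← Measure.prod_restrict,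
    lintegral_prod _ hmeas.aemeasurable]
  have hRHS : (∫⁻ x in s, D x) = ∫⁻ r in Ioi (0:ℝ), s.indicator D r := by
    rw [← lintegral_indicator hs, ← lintegral_indicator measurableSet_Ioi]
    refine lintegral_congr fun x => ?_
    by_cases hx : x ∈ Ioi (0:ℝ)
    · rw [Set.indicator_of_mem hx]
    · rw [Set.indicator_of_notMem hx]
      by_cases hxs : x ∈ s
      · rw [Set.indicator_of_mem hxs, hD_eval]
        have hx' : x ≤ 0 := not_lt.1 hx
        by_cases hx0 : 0 ≤ x
        · have : x = 0 := le_antisymm hx' hx0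
          simp [this]
        · simp [hx0]
      · rw [Set.indicator_of_notMem hxs]
  rw [hRHS]
  refine setLIntegral_congr_fun measurableSet_Ioi (fun r hr => ?_)
  have hr0 : (0:ℝ) < r := hr
  have hg_polar : ∀ t : ℝ, g (polarCoord.symm (r, t)) = r := by
    intro t
    simp only [polarCoord_symm_apply, hg_def]
    rw [mul_pow, mul_pow, ← mul_add, Real.cos_sq_add_sin_sq, mul_one, Real.sqrt_sq hr0.le]
  by_cases hrs : r ∈ s
  · have hcont : Continuous fun t : ℝ => c * e r t := by
      apply Continuous.mul continuous_const
      apply Real.continuous_exp.comp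
      exact continuous_const.mul (((Real.continuous_cos.pow 2).div_const _).add
        ((Real.continuous_sin.pow 2).div_const _))
    have hint : Integrable (fun t => c * e r t) (volume.restrict (Ioo (-π) π)) :=
      (hcont.integrableOn_Ioc (a := -π) (b := π)).mono_set Ioo_subset_Ioc_self
    have hper : Function.Periodic (fun t => c * e r t) (2 * π) := by
      intro t
      simp only [he_def, Real.cos_add_two_pi, Real.sin_add_two_pi]
    have hIoo : (∫ t in Ioo (-π) π, c * e r t) = c * I r := by
      rw [← integral_Ioc_eq_integral_Ioo,
        ← intervalIntegral.integral_of_le (by linarith [Real.pi_pos] : -π ≤ π)]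
      have h2 := hper.intervalIntegral_add_eq (-π) 0
      rw [show -π + 2*π = π by ring, zero_add] at h2
      rw [h2, hI_def, intervalIntegral.integral_const_mul]
    calc (∫⁻ t in Ioo (-π) π,
            ENNReal.ofReal (r, t).1 * (g ⁻¹' s).indicator dens2 (polarCoord.symm (r, t)))
        = ∫⁻ t in Ioo (-π) π, ENNReal.ofReal r * ENNReal.ofReal (c * e r t) := by
          refine lintegral_congr fun t => ?_
          rw [Set.indicator_of_mem (by simp only [Set.mem_preimage, hg_polar t]; exact hrs),
            polarCoord_symm_apply, hdp]
      _ = ENNReal.ofReal r * ∫⁻ t in Ioo (-π) π, ENNReal.ofReal (c * e r t) :=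
          lintegral_const_mul' _ _ ENNReal.ofReal_ne_top
      _ = ENNReal.ofReal r * ENNReal.ofReal (∫ t in Ioo (-π) π, c * e r t) := by
          rw [← ofReal_integral_eq_lintegral_ofReal hint
            (Filter.Eventually.of_forall fun t => by positivity)]
      _ = s.indicator D r := by
          rw [hIoo, Set.indicator_of_mem hrs, hD_eval, if_pos hr0.le,
            ENNReal.ofReal_mul hr0.le]
  · rw [Set.indicator_of_notMem hrs]
    calc (∫⁻ t in Ioo (-π) π,
            ENNReal.ofReal (r, t).1 * (g ⁻¹' s).indicator dens2 (polarCoord.symm (r, t)))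
        = ∫⁻ t in Ioo (-π) π, 0 := by
          refine lintegral_congr fun t => ?_
          rw [Set.indicator_of_notMem (by simp only [Set.mem_preimage, hg_polar t]; exact hrs),
            mul_zero]
      _ = 0 := lintegral_zero

/-- Theorem 2 (Hoyt density): for independent `X ~ N(0,λ₁)`, `Y ~ N(0,λ₂)` with
`λ₁, λ₂ > 0`, the law of `u = √(X² + Y²)` has Lebesgue density
`f(x) = (x/(2π√(λ₁λ₂))) ∫₀^{2π} exp(−x²(cos²t/(2λ₁) + sin²t/(2λ₂))) dt` for `x ≥ 0`
(and `0` for `x < 0`); this is the Hoyt (Nakagami-q) distribution. -/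
theorem hoyt_distribution_of_footprint_distance {Ω : Type*} [MeasurableSpace Ω]
    (μ : Measure Ω) [IsProbabilityMeasure μ] (v₁ v₂ : NNReal)
    (h₁ : 0 < v₁) (h₂ : 0 < v₂) (X Y : Ω → ℝ)
    (hX : Measurable X) (hY : Measurable Y) (hindep : IndepFun X Y μ)
    (hlawX : μ.map X = gaussianReal 0 v₁) (hlawY : μ.map Y = gaussianReal 0 v₂) :
    μ.map (fun ω => Real.sqrt (X ω ^ 2 + Y ω ^ 2)) =
      volume.withDensity (fun x => ENNReal.ofReal (
        if 0 ≤ x then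
          x / (2 * Real.pi * Real.sqrt ((v₁ : ℝ) * (v₂ : ℝ))) *
            ∫ t in (0 : ℝ)..(2 * Real.pi),
              Real.exp (-(x ^ 2) *
                (Real.cos t ^ 2 / (2 * (v₁ : ℝ)) + Real.sin t ^ 2 / (2 * (v₂ : ℝ))))
        else 0)) := by
  have hpair : μ.map (fun ω => (X ω, Y ω)) = (gaussianReal 0 v₁).prod (gaussianReal 0 v₂) := by
    rw [← hlawX, ← hlawY]
    exact (indepFun_iff_map_prod_eq_prod_map_map hX.aemeasurable hY.aemeasurable).mp hindep
  have hg : Measurable fun p : ℝ × ℝ => Real.sqrt (p.1 ^ 2 + p.2 ^ 2) :=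
    ((continuous_fst.pow 2).add (continuous_snd.pow 2)).sqrt.measurable
  have hcomp : μ.map (fun ω => Real.sqrt (X ω ^ 2 + Y ω ^ 2)) =
      (μ.map (fun ω => (X ω, Y ω))).map (fun p : ℝ × ℝ => Real.sqrt (p.1 ^ 2 + p.2 ^ 2)) := by
    rw [Measure.map_map hg (hX.prodMk hY)]
    rfl
  rw [hcomp, hpair, hoyt_core v₁ v₂ h₁ h₂]
end

section
/- (PDF of the geometric loss in the orthogonal case, Eq. (16).) Let λ > 0, A₀ > 0, c > 0, and let X, Y be independent real random variables, each with law N(0, λ). Define W = A₀ · exp(−c (X² + Y²)) and ϱ = 1/(2λc). Then for every x with 0 ≤ x ≤ A₀ one has P(W ≤ x) = (x/A₀)^ϱ, and the law of W is absolutely continuous with respect to Lebesgue measure with density f(x) = (ϱ/A₀)(x/A₀)^{ϱ−1} for 0 < x < A₀ and f(x) = 0 otherwise. (With c = 2/(k_mean w²(L)) and λ = σ_p² + μ_x² σ_o², this is the paper's power-law density with ϱ = k_mean w²(L)/(4(σ_p² + μ_x² σ_o²)).) -/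
open MeasureTheory ProbabilityTheory

section AuxGeomLoss
open Real Set Filter

lemma aux_exp_deriv (v : ℝ) (hv : 0 < v) (x : ℝ) :
    HasDerivAt (fun r : ℝ => -v * Real.exp (-r^2/(2*v))) (x * Real.exp (-x^2/(2*v))) x := by
  have h1 : HasDerivAt (fun r : ℝ => -r^2/(2*v)) (-x/v) x := by
    have h := ((hasDerivAt_pow 2 x).neg).div_const (2*v)
    refine h.congr_deriv ?_
    field_simp
    ring
  have h2 := (h1.exp).const_mul (-v)
  refine h2.congr_deriv ?_
  field_simp

lemma aux_Ioi (v : ℝ) (hv : 0 < v) (a : ℝ) (ha : 0 ≤ a) :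
    ∫ r in Set.Ioi a, r * Real.exp (-r^2/(2*v)) = v * Real.exp (-a^2/(2*v)) := by
  have hderiv : ∀ x ∈ Set.Ici a, HasDerivAt (fun r : ℝ => -v * Real.exp (-r^2/(2*v)))
      (x * Real.exp (-x^2/(2*v))) x := fun x _ => aux_exp_deriv v hv x
  have hpos : ∀ x ∈ Set.Ioi a, 0 ≤ x * Real.exp (-x^2/(2*v)) := fun x hx =>
    mul_nonneg (le_of_lt (lt_of_le_of_lt ha hx)) (Real.exp_pos _).le
  have htend : Tendsto (fun r : ℝ => -v * Real.exp (-r^2/(2*v))) atTop (nhds 0) := by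
    have h0 : Tendsto (fun r : ℝ => r^2/(2*v)) atTop atTop :=
      (tendsto_pow_atTop (two_ne_zero) : Tendsto (fun x : ℝ => x^2) atTop atTop).atTop_div_const
        (by linarith : (0:ℝ) < 2*v)
    have h1 : Tendsto (fun r : ℝ => -r^2/(2*v)) atTop atBot := by
      have h2 : Tendsto (fun r : ℝ => -(r^2/(2*v))) atTop atBot := tendsto_neg_atTop_atBot.comp h0
      exact h2.congr (fun r => by ring)
    have := (Real.tendsto_exp_atBot.comp h1).const_mul (-v)
    simpa using this
  have h := MeasureTheory.integral_Ioi_of_hasDerivAt_of_nonneg' hderiv hpos htend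
  rw [h]; ring

lemma aux_polar (v : ℝ) (hv : 0 < v) (t : ℝ) (ht : 0 ≤ t) :
    ∫ p : ℝ × ℝ, Set.indicator {q : ℝ × ℝ | t ≤ q.1^2 + q.2^2}
      (fun q => (2*π*v)⁻¹ * Real.exp (-(q.1^2 + q.2^2)/(2*v))) p = Real.exp (-t/(2*v)) := by
  have hπ := Real.pi_pos
  rw [← integral_comp_polarCoord_symm]
  have key : ∀ p : ℝ × ℝ,
      p.1 • Set.indicator {q : ℝ × ℝ | t ≤ q.1^2 + q.2^2}
        (fun q => (2*π*v)⁻¹ * Real.exp (-(q.1^2 + q.2^2)/(2*v))) (polarCoord.symm p)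
      = Set.indicator {r : ℝ | t ≤ r^2}
          (fun r => r * ((2*π*v)⁻¹ * Real.exp (-r^2/(2*v)))) p.1 := by
    intro p
    have hsq : (polarCoord.symm p).1^2 + (polarCoord.symm p).2^2 = p.1^2 := by
      simp only [polarCoord_symm_apply]
      nlinarith [sin_sq_add_cos_sq p.2]
    by_cases h : t ≤ p.1^2
    · have hm1 : polarCoord.symm p ∈ {q : ℝ × ℝ | t ≤ q.1^2 + q.2^2} := by
        show t ≤ (polarCoord.symm p).1^2 + (polarCoord.symm p).2^2
        rw [hsq]; exact h
      have hm2 : p.1 ∈ {r : ℝ | t ≤ r^2} := h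
      rw [Set.indicator_of_mem hm1, Set.indicator_of_mem hm2, hsq]
      simp [smul_eq_mul]
    · have hm1 : polarCoord.symm p ∉ {q : ℝ × ℝ | t ≤ q.1^2 + q.2^2} := by
        show ¬ t ≤ (polarCoord.symm p).1^2 + (polarCoord.symm p).2^2
        rw [hsq]; exact h
      have hm2 : p.1 ∉ {r : ℝ | t ≤ r^2} := h
      rw [Set.indicator_of_notMem hm1, Set.indicator_of_notMem hm2, smul_zero]
  simp_rw [key]
  rw [polarCoord_target, Measure.volume_eq_prod, ← Measure.prod_restrict]
  have hfub := MeasureTheory.integral_prod_mul (μ := volume.restrict (Set.Ioi (0:ℝ)))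
    (ν := volume.restrict (Set.Ioo (-π) π))
    (f := fun r : ℝ => Set.indicator {r : ℝ | t ≤ r^2}
      (fun r => r * ((2*π*v)⁻¹ * Real.exp (-r^2/(2*v)))) r)
    (g := fun _ : ℝ => (1:ℝ))
  simp only [mul_one] at hfub
  rw [hfub]
  have hone : ∫ _ : ℝ, (1:ℝ) ∂(volume.restrict (Set.Ioo (-π) π)) = 2*π := by
    simp [Real.volume_Ioo]
    rw [max_eq_left (by linarith)]
    ring
  rw [hone]
  have hmeasS : MeasurableSet {r : ℝ | t ≤ r^2} :=
    measurableSet_le measurable_const (measurable_id.pow_const 2)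
  rw [MeasureTheory.setIntegral_indicator hmeasS]
  have hsubset : Set.Ioi (Real.sqrt t) ⊆ Set.Ioi (0:ℝ) ∩ {r : ℝ | t ≤ r^2} := by
    intro x hx
    have hx' : Real.sqrt t < x := hx
    have hx0 : 0 < x := lt_of_le_of_lt (Real.sqrt_nonneg t) hx'
    refine ⟨hx0, ?_⟩
    show t ≤ x^2
    calc t = (Real.sqrt t)^2 := (Real.sq_sqrt ht).symm
    _ ≤ x^2 := pow_le_pow_left₀ (Real.sqrt_nonneg t) (le_of_lt hx') 2
  have haeeq : (Set.Ioi (0:ℝ) ∩ {r : ℝ | t ≤ r^2} : Set ℝ)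
      =ᵐ[volume] (Set.Ioi (Real.sqrt t) : Set ℝ) := by
    rw [MeasureTheory.ae_eq_set]
    constructor
    · have hsub' : (Set.Ioi (0:ℝ) ∩ {r : ℝ | t ≤ r^2}) \ Set.Ioi (Real.sqrt t)
          ⊆ ({Real.sqrt t} : Set ℝ) := by
        intro x hx
        obtain ⟨⟨hx0, hxt⟩, hx2⟩ := hx
        simp only [Set.mem_Ioi, not_lt] at hx2
        have hge : Real.sqrt t ≤ x := by
          calc Real.sqrt t ≤ Real.sqrt (x^2) := Real.sqrt_le_sqrt hxt
          _ = x := Real.sqrt_sq (le_of_lt hx0)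
        have hxx : x = Real.sqrt t := le_antisymm hx2 hge
        simp [hxx]
      exact measure_mono_null hsub' Real.volume_singleton
    · rw [Set.diff_eq_empty.2 hsubset]
      simp
  rw [MeasureTheory.setIntegral_congr_set haeeq]
  have hcomm : ∀ r : ℝ, r * ((2*π*v)⁻¹ * Real.exp (-r^2/(2*v)))
      = (2*π*v)⁻¹ * (r * Real.exp (-r^2/(2*v))) := fun r => by ring
  simp_rw [hcomm]
  rw [MeasureTheory.integral_const_mul, aux_Ioi v hv (Real.sqrt t) (Real.sqrt_nonneg t),
    Real.sq_sqrt ht]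
  field_simp

lemma aux_prod_density (v : NNReal) (hv : v ≠ 0) :
    (gaussianReal 0 v).prod (gaussianReal 0 v)
      = (volume : Measure (ℝ × ℝ)).withDensity
          (fun p => gaussianPDF 0 v p.1 * gaussianPDF 0 v p.2) := by
  refine Measure.prod_eq fun s t hs ht => ?_
  rw [withDensity_apply _ (hs.prod ht), Measure.volume_eq_prod, ← Measure.prod_restrict,
    MeasureTheory.lintegral_prod_mul (measurable_gaussianPDF 0 v).aemeasurable
      (measurable_gaussianPDF 0 v).aemeasurable,
    ← gaussianReal_apply 0 hv s, ← gaussianReal_apply 0 hv t]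

lemma aux_tail (v : NNReal) (hv : 0 < v) (t : ℝ) (ht : 0 ≤ t) :
    ((gaussianReal 0 v).prod (gaussianReal 0 v)) {q : ℝ × ℝ | t ≤ q.1^2 + q.2^2}
      = ENNReal.ofReal (Real.exp (-t/(2*(v:ℝ)))) := by
  have hv' : (v : ℝ) ≠ 0 := by exact_mod_cast hv.ne'
  have hvpos : (0:ℝ) < (v:ℝ) := by exact_mod_cast hv
  have hS : MeasurableSet {q : ℝ × ℝ | t ≤ q.1^2 + q.2^2} :=
    measurableSet_le measurable_const
      ((measurable_fst.pow_const 2).add (measurable_snd.pow_const 2))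
  rw [aux_prod_density v hv.ne', withDensity_apply _ hS, ← lintegral_indicator hS]
  have hpt : ∀ p : ℝ × ℝ,
      Set.indicator {q : ℝ × ℝ | t ≤ q.1^2 + q.2^2}
        (fun p => gaussianPDF 0 v p.1 * gaussianPDF 0 v p.2) p
      = ENNReal.ofReal (Set.indicator {q : ℝ × ℝ | t ≤ q.1^2 + q.2^2}
          (fun p => gaussianPDFReal 0 v p.1 * gaussianPDFReal 0 v p.2) p) := by
    intro p
    by_cases hp : p ∈ {q : ℝ × ℝ | t ≤ q.1^2 + q.2^2}
    · rw [Set.indicator_of_mem hp, Set.indicator_of_mem hp, gaussianPDF, gaussianPDF,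
        ENNReal.ofReal_mul (gaussianPDFReal_nonneg _ _ _)]
    · rw [Set.indicator_of_notMem hp, Set.indicator_of_notMem hp, ENNReal.ofReal_zero]
  simp_rw [hpt]
  have hint : Integrable (fun p : ℝ × ℝ =>
      gaussianPDFReal 0 v p.1 * gaussianPDFReal 0 v p.2) (volume : Measure (ℝ × ℝ)) := by
    rw [Measure.volume_eq_prod]
    exact Integrable.mul_prod (integrable_gaussianPDFReal 0 v) (integrable_gaussianPDFReal 0 v)
  have hnn : ∀ p : ℝ × ℝ, 0 ≤ Set.indicator {q : ℝ × ℝ | t ≤ q.1^2 + q.2^2}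
      (fun p => gaussianPDFReal 0 v p.1 * gaussianPDFReal 0 v p.2) p := fun p =>
    Set.indicator_nonneg (fun q _ =>
      mul_nonneg (gaussianPDFReal_nonneg _ _ _) (gaussianPDFReal_nonneg _ _ _)) p
  rw [← ofReal_integral_eq_lintegral_ofReal (hint.indicator hS) (ae_of_all _ hnn)]
  congr 1
  have hprodpdf : ∀ q : ℝ × ℝ, gaussianPDFReal 0 v q.1 * gaussianPDFReal 0 v q.2
      = (2*π*(v:ℝ))⁻¹ * Real.exp (-(q.1^2 + q.2^2)/(2*(v:ℝ))) := by
    intro q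
    simp only [gaussianPDFReal, sub_zero]
    rw [show ((√(2*π*(v:ℝ)))⁻¹ * Real.exp (-q.1^2/(2*(v:ℝ)))) *
        ((√(2*π*(v:ℝ)))⁻¹ * Real.exp (-q.2^2/(2*(v:ℝ))))
        = ((√(2*π*(v:ℝ))) * (√(2*π*(v:ℝ))))⁻¹ *
          (Real.exp (-q.1^2/(2*(v:ℝ))) * Real.exp (-q.2^2/(2*(v:ℝ)))) by
      rw [mul_inv]; ring]
    rw [Real.mul_self_sqrt (by positivity), ← Real.exp_add]
    congr 1
    ring
  rw [show Set.indicator {q : ℝ × ℝ | t ≤ q.1^2 + q.2^2}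
      (fun p : ℝ × ℝ => gaussianPDFReal 0 v p.1 * gaussianPDFReal 0 v p.2)
      = Set.indicator {q : ℝ × ℝ | t ≤ q.1^2 + q.2^2}
        (fun q : ℝ × ℝ => (2*π*(v:ℝ))⁻¹ * Real.exp (-(q.1^2 + q.2^2)/(2*(v:ℝ)))) from
    Set.indicator_congr (fun q _ => hprodpdf q)]
  exact aux_polar (v:ℝ) hvpos t ht

lemma density_integral (A₀ ϱ : ℝ) (hA : 0 < A₀) (hϱ : 0 < ϱ) (b : ℝ) (hb0 : 0 ≤ b) :
    ∫ x in Set.Ioo 0 b, ϱ/A₀ * (x/A₀)^(ϱ-1) = (b/A₀)^ϱ := by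
  have hcongr : ∀ x ∈ Set.Ioo (0:ℝ) b,
      ϱ/A₀ * (x/A₀)^(ϱ-1) = (ϱ/A₀ * (A₀^(ϱ-1))⁻¹) * x^(ϱ-1) := by
    intro x hx
    rw [Real.div_rpow (le_of_lt hx.1) hA.le, div_eq_mul_inv]
    ring
  rw [MeasureTheory.setIntegral_congr_fun measurableSet_Ioo hcongr,
    MeasureTheory.integral_const_mul, ← MeasureTheory.integral_Ioc_eq_integral_Ioo,
    ← intervalIntegral.integral_of_le hb0, integral_rpow (Or.inl (by linarith))]
  have he : ϱ - 1 + 1 = ϱ := by ring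
  rw [he, Real.zero_rpow hϱ.ne', sub_zero, Real.div_rpow hb0 hA.le]
  have hA1 : A₀ ^ (ϱ-1) = A₀^ϱ / A₀ := by rw [Real.rpow_sub hA, Real.rpow_one]
  have hApow : (0:ℝ) < A₀^ϱ := Real.rpow_pos_of_pos hA ϱ
  rw [hA1]
  field_simp

lemma density_integrable (A₀ ϱ : ℝ) (hA : 0 < A₀) (hϱ : 0 < ϱ) (b : ℝ) (hb0 : 0 ≤ b) :
    MeasureTheory.IntegrableOn (fun x : ℝ => ϱ/A₀ * (x/A₀)^(ϱ-1)) (Set.Ioo 0 b) := by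
  have h1 : IntervalIntegrable (fun x : ℝ => x^(ϱ-1)) volume 0 b :=
    intervalIntegral.intervalIntegrable_rpow' (by linarith)
  have h2 : IntegrableOn (fun x : ℝ => x^(ϱ-1)) (Set.Ioc 0 b) volume :=
    (intervalIntegrable_iff_integrableOn_Ioc_of_le hb0).mp h1
  have h3 := (h2.mono_set Set.Ioo_subset_Ioc_self).const_mul (ϱ/A₀ * (A₀^(ϱ-1))⁻¹)
  refine h3.congr ((ae_restrict_iff' measurableSet_Ioo).2 (ae_of_all _ (fun x hx => ?_)))
  show ϱ / A₀ * (A₀ ^ (ϱ - 1))⁻¹ * x ^ (ϱ - 1) = ϱ / A₀ * (x / A₀) ^ (ϱ - 1)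
  rw [Real.div_rpow (le_of_lt hx.1) hA.le, div_eq_mul_inv]
  ring


end AuxGeomLoss

open Real Set Filter in
/-- PDF of the geometric loss in the orthogonal case, Eq. (16): for independent
`X, Y ~ N(0,λ)` and `W = A₀ exp(−c(X² + Y²))` with `A₀, c > 0` and `ϱ = 1/(2λc)`, one
has `P(W ≤ x) = (x/A₀)^ϱ` for `0 ≤ x ≤ A₀`, and the law of `W` has Lebesgue density
`f(x) = (ϱ/A₀)(x/A₀)^{ϱ−1}` on `(0, A₀)` and `0` elsewhere. -/
theorem geometric_loss_pdf_orthogonal {Ω : Type*} [MeasurableSpace Ω]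
    (μ : Measure Ω) [IsProbabilityMeasure μ] (v : NNReal) (A₀ c : ℝ)
    (hv : 0 < v) (hA : 0 < A₀) (hc : 0 < c) (X Y : Ω → ℝ)
    (hX : Measurable X) (hY : Measurable Y) (hindep : IndepFun X Y μ)
    (hlawX : μ.map X = gaussianReal 0 v) (hlawY : μ.map Y = gaussianReal 0 v) :
    let W : Ω → ℝ := fun ω => A₀ * Real.exp (-c * (X ω ^ 2 + Y ω ^ 2))
    let ϱ : ℝ := 1 / (2 * (v : ℝ) * c)
    (∀ x : ℝ, 0 ≤ x → x ≤ A₀ →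
      μ {ω | W ω ≤ x} = ENNReal.ofReal ((x / A₀) ^ ϱ)) ∧
    μ.map W = volume.withDensity (fun x => ENNReal.ofReal (
      if 0 < x ∧ x < A₀ then ϱ / A₀ * (x / A₀) ^ (ϱ - 1) else 0)) := by
  intro W ϱ
  have hv' : (0:ℝ) < (v:ℝ) := by exact_mod_cast hv
  have hϱ : 0 < ϱ := by
    show (0:ℝ) < 1 / (2 * (v:ℝ) * c)
    positivity
  have hW : Measurable W :=
    (((hX.pow_const 2).add (hY.pow_const 2)).const_mul (-c)).exp.const_mul A₀
  have hjoint : μ.map (fun ω => (X ω, Y ω)) = (gaussianReal 0 v).prod (gaussianReal 0 v) := by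
    have h := (indepFun_iff_map_prod_eq_prod_map_map hX.aemeasurable hY.aemeasurable).mp hindep
    rwa [hlawX, hlawY] at h
  have hWpos : ∀ ω, 0 < W ω := fun ω => mul_pos hA (Real.exp_pos _)
  have hWleA : ∀ ω, W ω ≤ A₀ := by
    intro ω
    have hle : Real.exp (-c * (X ω ^ 2 + Y ω ^ 2)) ≤ 1 := by
      rw [Real.exp_le_one_iff]
      nlinarith [sq_nonneg (X ω), sq_nonneg (Y ω)]
    calc W ω = A₀ * Real.exp (-c * (X ω ^ 2 + Y ω ^ 2)) := rfl
    _ ≤ A₀ * 1 := by nlinarith [Real.exp_pos (-c * (X ω ^ 2 + Y ω ^ 2))]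
    _ = A₀ := mul_one A₀
  have key : ∀ x : ℝ, 0 < x → x ≤ A₀ →
      μ {ω | W ω ≤ x} = ENNReal.ofReal ((x / A₀) ^ ϱ) := by
    intro x hx0 hx1
    set t : ℝ := Real.log (A₀ / x) / c with htdef
    have hxA : 0 < x / A₀ := div_pos hx0 hA
    have hlog : Real.log (A₀ / x) = - Real.log (x / A₀) := by
      have h := Real.log_inv (x / A₀)
      rwa [inv_div] at h
    have ht : 0 ≤ t := by
      apply div_nonneg _ hc.le
      apply Real.log_nonneg
      rw [le_div_iff₀ hx0]
      linarith
    have hiff : ∀ s : ℝ, (A₀ * Real.exp (-c * s) ≤ x) ↔ t ≤ s := by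
      intro s
      calc A₀ * Real.exp (-c * s) ≤ x
          ↔ Real.exp (-c * s) ≤ x / A₀ := by
            rw [le_div_iff₀ hA, mul_comm (Real.exp (-c * s)) A₀]
        _ ↔ Real.exp (-c * s) ≤ Real.exp (Real.log (x / A₀)) := by rw [Real.exp_log hxA]
        _ ↔ -c * s ≤ Real.log (x / A₀) := Real.exp_le_exp
        _ ↔ t ≤ s := by
            rw [htdef, div_le_iff₀ hc, hlog]
            constructor <;> intro h <;> linarith
    have hSmeas : MeasurableSet {q : ℝ × ℝ | t ≤ q.1^2 + q.2^2} :=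
      measurableSet_le measurable_const
        ((measurable_fst.pow_const 2).add (measurable_snd.pow_const 2))
    have hset : {ω | W ω ≤ x}
        = (fun ω => (X ω, Y ω)) ⁻¹' {q : ℝ × ℝ | t ≤ q.1^2 + q.2^2} := by
      ext ω
      simp only [Set.mem_setOf_eq, Set.mem_preimage]
      exact hiff (X ω ^ 2 + Y ω ^ 2)
    rw [hset, ← Measure.map_apply (hX.prodMk hY) hSmeas, hjoint, aux_tail v hv t ht]
    have hexp : Real.exp (-t/(2*(v:ℝ))) = (x / A₀) ^ ϱ := by
      rw [Real.rpow_def_of_pos hxA, htdef, hlog]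
      refine congrArg Real.exp ?_
      have hgen : ∀ L : ℝ, -(-L/c)/(2*(v:ℝ)) = L * (1/(2*(v:ℝ)*c)) := by
        intro L
        field_simp
      exact hgen (Real.log (x / A₀))
    rw [hexp]
  constructor
  · intro x hx0 hx1
    rcases eq_or_lt_of_le hx0 with h|h
    · have hempty : {ω | W ω ≤ x} = ∅ := by
        ext ω
        simp only [Set.mem_setOf_eq, Set.mem_empty_iff_false, iff_false, not_le]
        rw [← h]
        exact hWpos ω
      rw [hempty, ← h]
      simp [Real.zero_rpow hϱ.ne']
    · exact key x h hx1
  · haveI : IsProbabilityMeasure (μ.map W) := Measure.isProbabilityMeasure_map hW.aemeasurable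
    refine Measure.ext_of_Iic (μ.map W) _ (fun a => ?_)
    rw [Measure.map_apply hW measurableSet_Iic, withDensity_apply _ measurableSet_Iic]
    have hDind : (fun x : ℝ => ENNReal.ofReal (if 0 < x ∧ x < A₀ then ϱ/A₀ * (x/A₀)^(ϱ-1) else 0))
        = fun x : ℝ => Set.indicator (Set.Ioo 0 A₀)
            (fun x => ENNReal.ofReal (ϱ/A₀ * (x/A₀)^(ϱ-1))) x := by
      funext x
      by_cases h : x ∈ Set.Ioo (0:ℝ) A₀
      · rw [Set.indicator_of_mem h, if_pos (Set.mem_Ioo.mp h)]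
      · rw [Set.indicator_of_notMem h, if_neg (by simpa [Set.mem_Ioo] using h),
          ENNReal.ofReal_zero]
    rw [hDind, lintegral_indicator measurableSet_Ioo,
      Measure.restrict_restrict measurableSet_Ioo]
    have hnnae : ∀ b : ℝ, 0 ≤ᵐ[volume.restrict (Set.Ioo (0:ℝ) b)]
        (fun x : ℝ => ϱ/A₀ * (x/A₀)^(ϱ-1)) := by
      intro b
      refine (ae_restrict_iff' measurableSet_Ioo).2 (ae_of_all _ (fun x hx => ?_))
      exact mul_nonneg (by positivity)
        (Real.rpow_nonneg (div_nonneg hx.1.le hA.le) _)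
    by_cases ha0 : a ≤ 0
    · have h1 : W ⁻¹' Set.Iic a = ∅ := by
        ext ω
        simp only [Set.mem_preimage, Set.mem_Iic, Set.mem_empty_iff_false, iff_false, not_le]
        exact lt_of_le_of_lt ha0 (hWpos ω)
      have h2 : Set.Ioo (0:ℝ) A₀ ∩ Set.Iic a = ∅ := by
        refine Set.eq_empty_iff_forall_notMem.2 (fun x hx => ?_)
        obtain ⟨⟨hx1, _⟩, hx3⟩ := hx
        have : x ≤ 0 := le_trans hx3 ha0
        linarith
      rw [h1, h2]
      simp
    · push_neg at ha0
      by_cases haA : a ≤ A₀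
      · have h1 : W ⁻¹' Set.Iic a = {ω | W ω ≤ a} := rfl
        rw [h1, key a ha0 haA]
        have haeq : (Set.Ioo (0:ℝ) A₀ ∩ Set.Iic a : Set ℝ) =ᵐ[volume] (Set.Ioo (0:ℝ) a : Set ℝ) := by
          rw [MeasureTheory.ae_eq_set]
          constructor
          · have hsub : (Set.Ioo (0:ℝ) A₀ ∩ Set.Iic a) \ Set.Ioo 0 a ⊆ ({a} : Set ℝ) := by
              intro x hx
              obtain ⟨⟨hx1, hx2⟩, hx3⟩ := hx
              simp only [Set.mem_Ioo, not_and, not_lt] at hx3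
              have hax : a ≤ x := hx3 hx1.1
              have hxa : x = a := le_antisymm hx2 hax
              simp [hxa]
            exact measure_mono_null hsub Real.volume_singleton
          · have hsub : Set.Ioo (0:ℝ) a ⊆ Set.Ioo 0 A₀ ∩ Set.Iic a := fun x hx =>
              ⟨⟨hx.1, lt_of_lt_of_le hx.2 haA⟩, hx.2.le⟩
            rw [Set.diff_eq_empty.2 hsub]
            simp
        rw [MeasureTheory.setLIntegral_congr haeq,
          ← ofReal_integral_eq_lintegral_ofReal (density_integrable A₀ ϱ hA hϱ a ha0.le)
            (hnnae a),
          density_integral A₀ ϱ hA hϱ a ha0.le]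
      · push_neg at haA
        have h1 : W ⁻¹' Set.Iic a = Set.univ := by
          ext ω
          simp only [Set.mem_preimage, Set.mem_Iic, Set.mem_univ, iff_true]
          exact le_of_lt (lt_of_le_of_lt (hWleA ω) haA)
        have h2 : Set.Ioo (0:ℝ) A₀ ∩ Set.Iic a = Set.Ioo 0 A₀ := by
          apply Set.inter_eq_left.2
          intro x hx
          exact le_of_lt (lt_trans hx.2 haA)
        rw [h1, h2, measure_univ,
          ← ofReal_integral_eq_lintegral_ofReal (density_integrable A₀ ϱ hA hϱ A₀ hA.le)
            (hnnae A₀),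
          density_integral A₀ ϱ hA hϱ A₀ hA.le, div_self hA.ne', Real.one_rpow,
          ENNReal.ofReal_one]
end
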